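/- Let G = Q_{2^{n+1}} (n ≥ 2), H₀ = ⟨τ⟩, and let χ : H₀ → ℂ^× be a faithful irreducible character. Let ψ = Ind_{H₀}^G χ. Then for every nontrivial cyclic subgroup C ⊆ G, the restriction ψ|_C is a sum of two nontrivial irreducible characters of C; in particular ⟨ψ|_C, u_C⟩ = 2, i.e., ⟨ψ, (u_C)^*⟩_G = 2. -/

import Mathlib

open Subgroup

section Characters

variable {G : Type} [Group G] [Fintype G]

/-- Inner product of class functions on a finite group. -/
noncomputable def innerCF (χ₁ χ₂ : G → ℂ) : ℂ :=
  (Fintype.card G : ℂ)⁻¹ * ∑ g : G, (starRingEnd ℂ) (χ₁ g) * χ₂ g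

/-- Induction of a class function supported on a subgroup `H ≤ G` to `G`. -/
noncomputable def indCF (H : Subgroup G) (f : G → ℂ) : G → ℂ :=
  fun g => (Nat.card H : ℂ)⁻¹ * ∑ x : G, f (x⁻¹ * g * x)

open Classical in
/-- The augmentation character `u_H = r_H - 1_H` of `H`, extended by zero to `G`. -/
noncomputable def augChar (H : Subgroup G) : G → ℂ :=
  fun h => if h ∈ H then (if h = 1 then (Nat.card H : ℂ) - 1 else -1) else 0

/-- The induced augmentation character `(u_H)^* = Ind_H^G (r_H - 1_H)`. -/
noncomputable def indAug (H : Subgroup G) : G → ℂ := indCF H (augChar H)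

open Classical in
/-- Extension by zero of a character of a subgroup. -/
noncomputable def zeroExt (H : Subgroup G) (χ : H →* ℂˣ) : G → ℂ :=
  fun g => if h : g ∈ H then (χ ⟨g, h⟩ : ℂ) else 0

end Characters

/-! ### Auxiliary lemmas -/

section Aux

set_option linter.unusedSectionVars false

/-- A homomorphism on a cyclic group from a compatible root of unity. -/
lemma exists_hom_aux {K : Type*} [Group K] (γ : K) (hγ : ∀ x : K, ∃ k : ℤ, γ ^ k = x)
    (z : ℂˣ) (hz : z ^ orderOf γ = 1) :
    ∃ ψ : K →* ℂˣ, ∀ k : ℤ, ψ (γ ^ k) = z ^ k := by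
  classical
  have key : ∀ (x : K) (k : ℤ), γ ^ k = x →
      z ^ Classical.choose (hγ x) = z ^ k := by
    intro x k hk
    have hs := Classical.choose_spec (hγ x)
    have h1 : γ ^ (Classical.choose (hγ x) - k) = 1 := by
      rw [zpow_sub, hs, hk, mul_inv_cancel]
    obtain ⟨q, hq⟩ := orderOf_dvd_iff_zpow_eq_one.mpr h1
    have h2 : Classical.choose (hγ x) = k + (orderOf γ : ℤ) * q := by linarith
    rw [h2, zpow_add, zpow_mul, zpow_natCast, hz, one_zpow, mul_one]
  refine ⟨{ toFun := fun x => z ^ Classical.choose (hγ x),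
            map_one' := ?_, map_mul' := ?_ }, fun k => key _ k rfl⟩
  · simpa using key 1 0 (zpow_zero γ)
  · intro x y
    obtain ⟨k, hk⟩ := hγ x
    obtain ⟨j, hj⟩ := hγ y
    have h : γ ^ (k + j) = x * y := by rw [zpow_add, hk, hj]
    rw [key _ _ h, key _ _ hk, key _ _ hj, zpow_add]

variable {G : Type} [Group G] [Fintype G]

lemma innerCF_indAug_aux (ψ : G → ℂ) (hclass : ∀ x g : G, ψ (x * g * x⁻¹) = ψ g)
    (C : Subgroup G) :
    innerCF ψ (indAug C)
      = (Nat.card C : ℂ)⁻¹ * ∑ g : G, (starRingEnd ℂ) (ψ g) * augChar C g := by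
  unfold innerCF indAug indCF
  have step1 : ∀ g : G, (starRingEnd ℂ) (ψ g) *
      ((Nat.card C : ℂ)⁻¹ * ∑ x : G, augChar C (x⁻¹ * g * x))
      = (Nat.card C : ℂ)⁻¹ * ∑ x : G, (starRingEnd ℂ) (ψ g) * augChar C (x⁻¹ * g * x) := by
    intro g
    simp only [Finset.mul_sum]
    exact Finset.sum_congr rfl (fun i _ => by ring)
  simp_rw [step1]
  rw [← Finset.mul_sum, Finset.sum_comm]
  have step2 : ∀ x : G, (∑ g : G, (starRingEnd ℂ) (ψ g) * augChar C (x⁻¹ * g * x))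
      = ∑ h : G, (starRingEnd ℂ) (ψ h) * augChar C h := by
    intro x
    refine (Fintype.sum_equiv (MulAut.conj x).toEquiv
      (fun h => (starRingEnd ℂ) (ψ h) * augChar C h)
      (fun g => (starRingEnd ℂ) (ψ g) * augChar C (x⁻¹ * g * x)) ?_).symm
    intro h
    have h1 : ψ (x * h * x⁻¹) = ψ h := hclass x h
    have h2 : x⁻¹ * (x * h * x⁻¹) * x = h := by group
    simp only [MulEquiv.toEquiv_eq_coe, EquivLike.coe_coe, MulAut.conj_apply]
    rw [h1, h2]
  simp_rw [step2]
  rw [Finset.sum_const, Finset.card_univ, nsmul_eq_mul]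
  have hG : (Fintype.card G : ℂ) ≠ 0 := Nat.cast_ne_zero.mpr Fintype.card_ne_zero
  field_simp

lemma sum_augChar_aux (ψ : G → ℂ) (C : Subgroup G) [Fintype ↥C] :
    ∑ g : G, (starRingEnd ℂ) (ψ g) * augChar C g
      = (starRingEnd ℂ) (ψ 1) * (Nat.card C : ℂ) - ∑ c : ↥C, (starRingEnd ℂ) (ψ ↑c) := by
  classical
  have h0 : ∑ g : G, (starRingEnd ℂ) (ψ g) * augChar C g
      = ∑ g ∈ Finset.univ.filter (· ∈ C), (starRingEnd ℂ) (ψ g) * augChar C g := by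
    refine (Finset.sum_filter_of_ne ?_).symm
    intro x _ hx
    by_contra hxC
    exact hx (by simp [augChar, hxC])
  rw [h0, Finset.sum_subtype (p := fun x => x ∈ C) _ (fun x => by simp)]
  have h1 : ∀ c : ↥C, (starRingEnd ℂ) (ψ ↑c) * augChar C ↑c
      = (starRingEnd ℂ) (ψ ↑c) * (if (c : G) = 1 then (Nat.card C : ℂ) else 0)
        - (starRingEnd ℂ) (ψ ↑c) := by
    intro c
    have : augChar C ↑c = (if (c : G) = 1 then (Nat.card C : ℂ) else 0) - 1 := by
      simp only [augChar, c.2, if_true]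
      split_ifs <;> ring
    rw [this]; ring
  simp_rw [h1]
  rw [Finset.sum_sub_distrib]
  congr 1
  rw [Fintype.sum_eq_single (1 : ↥C)]
  · simp
  · intro c hc
    have : (c : G) ≠ 1 := fun h => hc (Subtype.ext h)
    simp [this]

end Aux

section QAux

open QuaternionGroup

variable {m : ℕ} [NeZero m]

set_option linter.unusedSectionVars false

lemma inv_a' (i : ZMod (2 * m)) : (a i : QuaternionGroup m)⁻¹ = a (-i) := rfl
lemma inv_xa' (i : ZMod (2 * m)) :
    (xa i : QuaternionGroup m)⁻¹ = xa ((m : ZMod (2*m)) + i) := rfl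

lemma a_one_zpow' (k : ℤ) : (a 1 : QuaternionGroup m) ^ k = a (k : ZMod (2 * m)) := by
  rcases k with k | k
  · rw [Int.ofNat_eq_coe, zpow_natCast, a_one_pow]
    norm_cast
  · rw [zpow_negSucc, a_one_pow, inv_a']
    congr 1
    push_cast
    ring

lemma a_mem' (i : ZMod (2 * m)) : (a i : QuaternionGroup m) ∈ zpowers (a 1) :=
  mem_zpowers_iff.mpr ⟨(i.val : ℤ), by
    rw [a_one_zpow']; norm_cast; rw [ZMod.natCast_val, ZMod.cast_id]⟩

lemma xa_not_mem' (i : ZMod (2 * m)) : (xa i : QuaternionGroup m) ∉ zpowers (a 1) := by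
  intro h
  obtain ⟨k, hk⟩ := mem_zpowers_iff.mp h
  rw [a_one_zpow'] at hk
  simp at hk

def qEquiv : ZMod (2 * m) ⊕ ZMod (2 * m) ≃ QuaternionGroup m where
  toFun s := match s with | Sum.inl j => a j | Sum.inr j => xa j
  invFun g := match g with | a j => Sum.inl j | xa j => Sum.inr j
  left_inv := by rintro (x | x) <;> rfl
  right_inv := by rintro (x | x) <;> rfl

lemma sum_split (f : QuaternionGroup m → ℂ) :
    ∑ x : QuaternionGroup m, f x
      = (∑ i : ZMod (2*m), f (a i)) + ∑ i : ZMod (2*m), f (xa i) := by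
  rw [← Equiv.sum_comp (qEquiv (m := m)) f, Fintype.sum_sum_type]
  rfl

variable (χ : ↥(zpowers (a 1 : QuaternionGroup m)) →* ℂˣ)

lemma E_xa (i : ZMod (2 * m)) : zeroExt (zpowers (a 1)) χ (xa i) = 0 :=
  dif_neg (xa_not_mem' i)

lemma E_a (i : ZMod (2 * m)) :
    zeroExt (zpowers (a 1)) χ (a i) = χ ⟨a i, a_mem' i⟩ := dif_pos (a_mem' i)

lemma psi_formula (g : QuaternionGroup m) :
    indCF (zpowers (a 1)) (zeroExt _ χ) g
      = zeroExt (zpowers (a 1)) χ g + zeroExt (zpowers (a 1)) χ g⁻¹ := by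
  have h2m : ((2 * m : ℕ) : ℂ) ≠ 0 :=
    Nat.cast_ne_zero.mpr (by simp [NeZero.ne m])
  have hcard : (Nat.card ↥(zpowers (a 1 : QuaternionGroup m)) : ℂ) = ((2 * m : ℕ) : ℂ) := by
    rw [Nat.card_zpowers, orderOf_a_one]
  have hzcard : Fintype.card (ZMod (2 * m)) = 2 * m := by
    haveI : NeZero (2 * m) := ⟨by simpa using NeZero.ne m⟩
    exact ZMod.card _
  unfold indCF
  rw [hcard]
  cases g with
  | a k =>
    rw [sum_split (fun x => zeroExt (zpowers (a 1)) χ (x⁻¹ * a k * x))]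
    have h1 : ∀ i : ZMod (2*m), zeroExt (zpowers (a 1)) χ ((a i)⁻¹ * a k * a i)
        = zeroExt (zpowers (a 1)) χ (a k) := by
      intro i; congr 1
      rw [inv_a', a_mul_a, a_mul_a]; congr 1; ring
    have h2 : ∀ i : ZMod (2*m), zeroExt (zpowers (a 1)) χ ((xa i)⁻¹ * a k * xa i)
        = zeroExt (zpowers (a 1)) χ ((a k)⁻¹) := by
      intro i; congr 1
      rw [inv_xa', xa_mul_a, xa_mul_xa, inv_a']; congr 1; ring
    rw [Finset.sum_congr rfl (fun i _ => h1 i), Finset.sum_congr rfl (fun i _ => h2 i),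
      Finset.sum_const, Finset.sum_const, Finset.card_univ, hzcard, nsmul_eq_mul, nsmul_eq_mul,
      ← mul_add, inv_mul_cancel_left₀ h2m]
  | xa k =>
    rw [sum_split (fun x => zeroExt (zpowers (a 1)) χ (x⁻¹ * xa k * x))]
    have h1 : ∀ i : ZMod (2*m), zeroExt (zpowers (a 1)) χ ((a i)⁻¹ * xa k * a i) = 0 := by
      intro i; rw [inv_a', a_mul_xa, xa_mul_a, E_xa]
    have h2 : ∀ i : ZMod (2*m), zeroExt (zpowers (a 1)) χ ((xa i)⁻¹ * xa k * xa i) = 0 := by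
      intro i; rw [inv_xa', xa_mul_xa, a_mul_xa, E_xa]
    rw [Finset.sum_congr rfl (fun i _ => h1 i), Finset.sum_congr rfl (fun i _ => h2 i),
      inv_xa', E_xa, E_xa]
    simp

lemma psi_conj (x g : QuaternionGroup m) :
    indCF (zpowers (a 1)) (zeroExt _ χ) (x * g * x⁻¹)
      = indCF (zpowers (a 1)) (zeroExt _ χ) g := by
  rw [psi_formula, psi_formula]
  have key : ∀ k : ZMod (2*m),
      zeroExt (zpowers (a 1)) χ (a (-k)) + zeroExt (zpowers (a 1)) χ (a (-k))⁻¹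
        = zeroExt (zpowers (a 1)) χ (a k) + zeroExt (zpowers (a 1)) χ (a k)⁻¹ := by
    intro k
    rw [inv_a', inv_a', neg_neg, add_comm]
  cases g with
  | a k =>
    cases x with
    | a i =>
      congr 2 <;> · congr 1; rw [inv_a', a_mul_a, a_mul_a]; congr 1; ring
    | xa i =>
      have : xa i * a k * (xa i)⁻¹ = a (-k) := by
        rw [inv_xa', xa_mul_a, xa_mul_xa]
        congr 1
        have h2m0 : ((2 * m : ℕ) : ZMod (2 * m)) = 0 := ZMod.natCast_self _
        push_cast at h2m0 ⊢
        linear_combination h2m0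
      rw [this, key]
  | xa k =>
    have hx : ∀ y : QuaternionGroup m, ∃ t, y * xa k * y⁻¹ = xa t := by
      intro y
      cases y with
      | a i => exact ⟨_, by rw [inv_a', a_mul_xa, xa_mul_a]⟩
      | xa i => exact ⟨_, by rw [inv_xa', xa_mul_xa, a_mul_xa]⟩
    obtain ⟨t, ht⟩ := hx x
    rw [ht, inv_xa', inv_xa', E_xa, E_xa, E_xa, E_xa]

end QAux

open QuaternionGroup in
theorem stmt15_aux (m : ℕ) [NeZero m]
    (χ : ↥(zpowers (a 1 : QuaternionGroup m)) →* ℂˣ)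
    (hχ : Function.Injective χ)
    (C : Subgroup (QuaternionGroup m)) (hC : C ≠ ⊥) (hcyc : IsCyclic C) :
    (∃ ψ₁ ψ₂ : ↥C →* ℂˣ, ψ₁ ≠ 1 ∧ ψ₂ ≠ 1 ∧
      ∀ c : ↥C,
        indCF (zpowers (a 1)) (zeroExt _ χ) (c : QuaternionGroup m)
          = (ψ₁ c : ℂ) + (ψ₂ c : ℂ)) ∧
    innerCF (indCF (zpowers (a 1)) (zeroExt _ χ)) (indAug C) = 2 := by
  classical
  have hm1 : 1 ≤ m := Nat.pos_of_ne_zero (NeZero.ne m)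
  -- the central element of order two in H₀
  have hmm : ((m : ZMod (2*m)) : ZMod (2*m)) + (m : ZMod (2*m)) = 0 := by
    have : ((2 * m : ℕ) : ZMod (2*m)) = 0 := ZMod.natCast_self _
    push_cast at this ⊢
    linear_combination this
  have hmne : ((m : ZMod (2*m)) : ZMod (2*m)) ≠ 0 := by
    intro h
    rw [ZMod.natCast_eq_zero_iff] at h
    have h2 := Nat.le_of_dvd hm1 h
    omega
  set ζ : ↥(zpowers (a 1 : QuaternionGroup m)) := ⟨a (m : ZMod (2*m)), a_mem' _⟩ with hζ
  have hζ2 : ζ * ζ = 1 := by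
    apply Subtype.ext
    show a (m : ZMod (2*m)) * a (m : ZMod (2*m)) = 1
    rw [a_mul_a, hmm, one_def]
  have hζne : ζ ≠ 1 := by
    intro h
    have : a (m : ZMod (2*m)) = (a 0 : QuaternionGroup m) := by
      have := congrArg (Subtype.val) h
      exact this
    exact hmne (a.inj this)
  have hχζ : (χ ζ : ℂ) = -1 := by
    have h1 : (χ ζ : ℂ) * (χ ζ : ℂ) = 1 := by
      rw [← Units.val_mul, ← map_mul, hζ2, map_one, Units.val_one]
    have h2 : (χ ζ : ℂ) ≠ 1 := by
      intro h
      exact hζne (hχ (Units.ext (by rw [h, map_one, Units.val_one])))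
    rcases mul_self_eq_one_iff.mp h1 with h | h
    · exact absurd h h2
    · exact h
  have hψone : indCF (zpowers (a 1 : QuaternionGroup m)) (zeroExt _ χ) 1 = 2 := by
    rw [psi_formula, inv_one]
    have hE1 : zeroExt (zpowers (a 1 : QuaternionGroup m)) χ 1 = 1 := by
      have h1 : (1 : QuaternionGroup m) ∈ zpowers (a 1) := one_mem _
      show (if h : (1 : QuaternionGroup m) ∈ zpowers (a 1) then (χ ⟨1, h⟩ : ℂ) else 0) = 1
      rw [dif_pos h1]
      have : (⟨1, h1⟩ : ↥(zpowers (a 1 : QuaternionGroup m))) = 1 := rfl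
      rw [this, map_one, Units.val_one]
    rw [hE1]
    norm_num
  have hψxa : ∀ t : ZMod (2*m),
      indCF (zpowers (a 1 : QuaternionGroup m)) (zeroExt _ χ) (xa t) = 0 := by
    intro t
    rw [psi_formula, inv_xa', E_xa, E_xa, add_zero]
  have hψz : indCF (zpowers (a 1 : QuaternionGroup m)) (zeroExt _ χ) (a (m : ZMod (2*m)))
      = -2 := by
    rw [psi_formula, inv_a']
    have hneg : -((m : ZMod (2*m)) : ZMod (2*m)) = (m : ZMod (2*m)) := by
      rw [neg_eq_iff_add_eq_zero]
      linear_combination hmm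
    rw [hneg, E_a]
    have : (⟨a (m : ZMod (2*m)), a_mem' _⟩ : ↥(zpowers (a 1 : QuaternionGroup m))) = ζ := rfl
    rw [this, hχζ]
    norm_num
  -- part 1
  have part1 : ∃ ψ₁ ψ₂ : ↥C →* ℂˣ, ψ₁ ≠ 1 ∧ ψ₂ ≠ 1 ∧
      ∀ c : ↥C,
        indCF (zpowers (a 1)) (zeroExt _ χ) (c : QuaternionGroup m)
          = (ψ₁ c : ℂ) + (ψ₂ c : ℂ) := by
    by_cases hle : C ≤ zpowers (a 1 : QuaternionGroup m)
    · -- C is contained in H₀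
      obtain ⟨c₀, hc₀⟩ := Subgroup.ne_bot_iff_exists_ne_one.mp hC
      set ψ₁ : ↥C →* ℂˣ := χ.comp (Subgroup.inclusion hle) with hψ₁def
      have hψ₁ne : ψ₁ ≠ 1 := by
        intro h
        apply hc₀
        have h1 : χ (Subgroup.inclusion hle c₀) = 1 := by
          have := DFunLike.congr_fun h c₀
          simpa [hψ₁def] using this
        have h2 : Subgroup.inclusion hle c₀ = 1 := hχ (by rw [h1, map_one])
        apply Subtype.ext
        have := congrArg Subtype.val h2
        simpa [Subgroup.coe_inclusion] using this
      refine ⟨ψ₁, ψ₁⁻¹, hψ₁ne, fun h => hψ₁ne (MonoidHom.ext fun c => by simpa using DFunLike.congr_fun h c), ?_⟩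
      intro c
      rw [psi_formula]
      have hc1 : (c : QuaternionGroup m) ∈ zpowers (a 1) := hle c.2
      have hc2 : ((c : QuaternionGroup m))⁻¹ ∈ zpowers (a 1) := inv_mem hc1
      simp only [zeroExt]
      rw [dif_pos hc1, dif_pos hc2]
      have e1 : (⟨(c : QuaternionGroup m), hc1⟩ : ↥(zpowers (a 1)))
          = Subgroup.inclusion hle c := by
        apply Subtype.ext
        simp [Subgroup.coe_inclusion]
      have e2 : (⟨((c : QuaternionGroup m))⁻¹, hc2⟩ : ↥(zpowers (a 1)))
          = (Subgroup.inclusion hle c)⁻¹ := by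
        apply Subtype.ext
        simp [Subgroup.coe_inclusion]
      rw [e1, e2, map_inv]
      simp [hψ₁def]
    · -- C contains an element of the form xa j
      obtain ⟨γ, hγ⟩ := hcyc.exists_generator
      have hγ' : ∀ x : ↥C, ∃ k : ℤ, γ ^ k = x := fun x => mem_zpowers_iff.mp (hγ x)
      have hxa : ∃ j, (γ : QuaternionGroup m) = xa j := by
        rcases hq : (γ : QuaternionGroup m) with j | j
        · exfalso
          apply hle
          intro x hx
          obtain ⟨k, hk⟩ := hγ' ⟨x, hx⟩
          have hx' : ((γ : QuaternionGroup m)) ^ k = x := by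
            have := congrArg Subtype.val hk
            simpa [SubgroupClass.coe_zpow] using this
          rw [hq] at hx'
          rw [← hx']
          exact zpow_mem (a_mem' j) k
        · exact ⟨j, rfl⟩
      obtain ⟨j, hγxa⟩ := hxa
      have hord4 : orderOf γ = 4 := by
        have h1 : orderOf (C.subtype γ) = orderOf γ :=
          orderOf_injective C.subtype C.subtype_injective γ
        rw [← h1, show C.subtype γ = xa j from hγxa]
        exact orderOf_xa j
      set zI : ℂˣ := Units.mk0 Complex.I Complex.I_ne_zero with hzI
      have hzI4 : zI ^ (4:ℕ) = 1 := by
        apply Units.ext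
        rw [Units.val_pow_eq_pow_val, Units.val_one]
        simp [hzI, pow_succ, Complex.I_mul_I]
      obtain ⟨ψ₁, hψ₁⟩ := exists_hom_aux γ hγ' zI (by rw [hord4]; exact hzI4)
      have hIne1 : zI ≠ 1 := by
        intro h
        have h1 : Complex.I = 1 := congrArg Units.val h
        have h2 := Complex.I_sq
        rw [h1] at h2
        norm_num at h2
      have hψ₁ne : ψ₁ ≠ 1 := by
        intro h
        have h1 := hψ₁ 1
        rw [h] at h1
        simp only [MonoidHom.one_apply, zpow_one] at h1
        exact hIne1 h1.symm
      refine ⟨ψ₁, ψ₁⁻¹, hψ₁ne, fun h => hψ₁ne (MonoidHom.ext fun c => by simpa using DFunLike.congr_fun h c), ?_⟩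
      intro c
      obtain ⟨k, hk⟩ := hγ' c
      have hcoe : (c : QuaternionGroup m) = (xa j) ^ k := by
        have h := congrArg Subtype.val hk
        rw [← h]
        simp [SubgroupClass.coe_zpow, hγxa]
      have hψc : ψ₁ c = zI ^ k := by rw [← hk]; exact hψ₁ k
      have hψic : (ψ₁⁻¹) c = (zI ^ k)⁻¹ := by
        rw [MonoidHom.inv_apply, hψc]
      have hxa4 : (xa j : QuaternionGroup m) ^ (4:ℤ) = 1 := by
        rw [show (4:ℤ) = ((4:ℕ):ℤ) from rfl, zpow_natCast, xa_pow_four]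
      have hz4 : zI ^ (4:ℤ) = 1 := by
        rw [show (4:ℤ) = ((4:ℕ):ℤ) from rfl, zpow_natCast, hzI4]
      have hmod : ∀ {M : Type} [inst : Group M] (u : M), u ^ (4:ℤ) = 1 → u ^ k = u ^ (k % 4) := by
        intro M _ u hu
        conv_lhs => rw [show k = 4 * (k / 4) + k % 4 from (Int.mul_ediv_add_emod k 4).symm]
        rw [zpow_add, zpow_mul, hu, one_zpow, one_mul]
      rw [hcoe, hψc, hψic, hmod _ hxa4, hmod _ hz4]
      have h40 : 0 ≤ k % 4 := Int.emod_nonneg k (by norm_num)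
      have h44 : k % 4 < 4 := Int.emod_lt_of_pos k (by norm_num)
      have hcases : k % 4 = 0 ∨ k % 4 = 1 ∨ k % 4 = 2 ∨ k % 4 = 3 := by omega
      have hz2 : zI ^ (2:ℤ) = -1 := by
        apply Units.ext
        rw [show (2:ℤ) = ((2:ℕ):ℤ) from rfl, zpow_natCast, Units.val_pow_eq_pow_val]
        simp [hzI, pow_succ, Complex.I_mul_I]
      have hz3 : zI ^ (3:ℤ) = -zI := by
        apply Units.ext
        rw [show (3:ℤ) = ((3:ℕ):ℤ) from rfl, zpow_natCast, Units.val_pow_eq_pow_val]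
        simp [hzI, pow_succ, Complex.I_mul_I]
      rcases hcases with h | h | h | h <;> rw [h]
      · simp only [zpow_zero]
        rw [hψone]
        norm_num
      · simp only [zpow_one]
        rw [hψxa]
        rw [show ((zI⁻¹ : ℂˣ) : ℂ) = (Complex.I)⁻¹ from by simp [hzI]]
        rw [Complex.inv_I]
        simp [hzI]
      · rw [show ((xa j : QuaternionGroup m)) ^ (2:ℤ) = a (m : ZMod (2*m)) from by
          rw [show (2:ℤ) = ((2:ℕ):ℤ) from rfl, zpow_natCast, xa_sq]]
        rw [hψz, hz2]
        norm_num
      · rw [show ((xa j : QuaternionGroup m)) ^ (3:ℤ) = xa (j - (m : ZMod (2*m))) from by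
          rw [show (3:ℤ) = ((3:ℕ):ℤ) from rfl, zpow_natCast, pow_succ, xa_sq, a_mul_xa]]
        rw [hψxa, hz3]
        simp [hzI, Units.val_inv_eq_inv_val, inv_neg, Complex.inv_I]
  refine ⟨part1, ?_⟩
  -- part 2
  obtain ⟨ψ₁, ψ₂, hψ₁ne, hψ₂ne, hsum⟩ := part1
  haveI : Fintype ↥C := Fintype.ofFinite _
  rw [innerCF_indAug_aux _ (fun x g => psi_conj χ x g) C, sum_augChar_aux]
  have hsum1 : ∀ (ψ' : ↥C →* ℂˣ), ψ' ≠ 1 → ∑ c : ↥C, ((ψ' c : ℂ)) = 0 := by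
    intro ψ' hne
    have h : (Units.coeHom ℂ).comp ψ' ≠ 1 := by
      intro h
      apply hne
      ext c
      have := congrArg (fun f => f c) (congrArg (fun f => f.toFun) h)
      simpa using Units.ext (by simpa using DFunLike.congr_fun h c)
    simpa using sum_hom_units_eq_zero ((Units.coeHom ℂ).comp ψ') h
  have hsc : ∑ c : ↥C, (starRingEnd ℂ)
      (indCF (zpowers (a 1 : QuaternionGroup m)) (zeroExt _ χ) ↑c) = 0 := by
    rw [← map_sum]
    have : ∑ c : ↥C, indCF (zpowers (a 1 : QuaternionGroup m)) (zeroExt _ χ) ↑c = 0 := by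
      rw [Finset.sum_congr rfl (fun c _ => hsum c), Finset.sum_add_distrib,
        hsum1 ψ₁ hψ₁ne, hsum1 ψ₂ hψ₂ne, add_zero]
    rw [this, map_zero]
  rw [hsc, hψone]
  have hconj2 : (starRingEnd ℂ) (2 : ℂ) = 2 := map_ofNat _ 2
  rw [hconj2]
  have hCcard : (Nat.card ↥C : ℂ) ≠ 0 := Nat.cast_ne_zero.mpr (Nat.card_pos).ne'
  field_simp
  ring


/-- Let `G = Q_{2^{n+1}}` (`n ≥ 2`), `H₀ = ⟨τ⟩`, `χ : H₀ → ℂ^×` a faithful irreducible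
character, and `ψ = Ind_{H₀}^G χ`.  Then for every nontrivial cyclic subgroup `C ⊆ G`,
the restriction `ψ|_C` is a sum of two nontrivial irreducible characters of `C`; in
particular `⟨ψ, (u_C)^*⟩_G = 2`. -/
theorem stmt15 (n : ℕ) (hn : 2 ≤ n)
    (χ : ↥(zpowers (QuaternionGroup.a 1 : QuaternionGroup (2 ^ (n - 1)))) →* ℂˣ)
    (hχ : Function.Injective χ)
    (C : Subgroup (QuaternionGroup (2 ^ (n - 1)))) (hC : C ≠ ⊥) (hcyc : IsCyclic C) :
    (∃ ψ₁ ψ₂ : ↥C →* ℂˣ, ψ₁ ≠ 1 ∧ ψ₂ ≠ 1 ∧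
      ∀ c : ↥C,
        indCF (zpowers (QuaternionGroup.a 1)) (zeroExt _ χ) (c : QuaternionGroup (2 ^ (n - 1)))
          = (ψ₁ c : ℂ) + (ψ₂ c : ℂ)) ∧
    innerCF (indCF (zpowers (QuaternionGroup.a 1)) (zeroExt _ χ)) (indAug C) = 2 :=
  stmt15_aux (2 ^ (n - 1)) χ hχ C hC hcyc
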